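/- Let c ≥ 0 and ζ ∈ ℂ with ζ ∉ [c,∞). Then for every real x ≥ c one has (x + 1)²/|x − ζ|² ≤ (c + 2)²·ρ(ζ). -/

import Mathlib

/-- The coefficient `c(ψ)` from the paper, for `ψ ∈ (0, 2π)`:
`c(ψ) = 1/|sin ψ|` if `ψ ∈ (0, π/2) ∪ (3π/2, 2π)`, and `c(ψ) = 1` if `ψ ∈ [π/2, 3π/2]`. -/
noncomputable def cArg (ψ : ℝ) : ℝ :=
  if (0 < ψ ∧ ψ < Real.pi / 2) ∨ (3 * Real.pi / 2 < ψ ∧ ψ < 2 * Real.pi) then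
    |Real.sin ψ|⁻¹
  else 1

/-- The quantity `ρ(ζ)` from the paper: `ρ(ζ) = c(ψ)² |ζ − c|⁻²` if `|ζ − c| < 1`, and
`ρ(ζ) = c(ψ)²` if `|ζ − c| ≥ 1`, where `ψ = arg(ζ − c) ∈ (0, 2π)`. -/
noncomputable def rhoFlat (c : ℝ) (ζ : ℂ) (ψ : ℝ) : ℝ :=
  if ‖ζ - (c : ℂ)‖ < 1 then cArg ψ ^ 2 * (‖ζ - (c : ℂ)‖)⁻¹ ^ 2
  else cArg ψ ^ 2

private lemma keyA1 (c t r co s : ℝ) (hc : 0 ≤ c) (hr0 : 0 < r) (hr1 : r ≤ 1)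
    (hs2 : s ^ 2 + co ^ 2 = 1) (hco : 0 ≤ co) (hco1 : co ≤ 1) :
    (t + c + 1) ^ 2 * (s ^ 2 * r ^ 2) ≤ (c + 2) ^ 2 * ((t - r * co) ^ 2 + (r * s) ^ 2) := by
  have hrco : r * co ≤ 1 := mul_le_one₀ hr1 hco hco1
  have hvB : (r * co + c + 1) ^ 2 + r ^ 2 * s ^ 2 ≤ (c + 2) ^ 2 := by
    nlinarith [hrco, mul_pos hr0 hr0, sq_nonneg r]
  have hquad : (r ^ 2 * s ^ 2) * (t + c + 1) ^ 2
      ≤ ((r * co + c + 1) ^ 2 + r ^ 2 * s ^ 2) * ((t - r * co) ^ 2 + r ^ 2 * s ^ 2) := by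
    nlinarith [sq_nonneg ((r * co + c + 1) * (t - r * co) - r ^ 2 * s ^ 2)]
  have h4 := mul_le_mul_of_nonneg_right hvB
    (by positivity : (0:ℝ) ≤ (t - r * co) ^ 2 + r ^ 2 * s ^ 2)
  nlinarith [hquad, h4]

private lemma keyA2 (c t r co s : ℝ) (hc : 0 ≤ c) (hr0 : 0 < r) (hr1 : 1 ≤ r)
    (hs2 : s ^ 2 + co ^ 2 = 1) (hco1 : co ≤ 1) :
    (t + c + 1) ^ 2 * s ^ 2 * r ^ 2 ≤ (c + 2) ^ 2 * ((t - r * co) ^ 2 + (r * s) ^ 2) * r ^ 2 := by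
  have h1 : r ≤ r ^ 2 := by nlinarith
  have h2 : r * co ≤ r ^ 2 := by nlinarith
  have hvB : (r * co + c + 1) ^ 2 + r ^ 2 * s ^ 2 ≤ (c + 2) ^ 2 * r ^ 2 := by
    nlinarith [mul_le_mul_of_nonneg_left h2 (by linarith : (0:ℝ) ≤ 2 * (c + 1)),
      mul_le_mul_of_nonneg_left (by nlinarith : (1:ℝ) ≤ r ^ 2) (sq_nonneg (c + 1))]
  have hquad : (r ^ 2 * s ^ 2) * (t + c + 1) ^ 2
      ≤ ((r * co + c + 1) ^ 2 + r ^ 2 * s ^ 2) * ((t - r * co) ^ 2 + r ^ 2 * s ^ 2) := by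
    nlinarith [sq_nonneg ((r * co + c + 1) * (t - r * co) - r ^ 2 * s ^ 2)]
  have h4 := mul_le_mul_of_nonneg_right hvB
    (by positivity : (0:ℝ) ≤ (t - r * co) ^ 2 + r ^ 2 * s ^ 2)
  nlinarith [hquad, h4]

private lemma keyB1 (c t r co s : ℝ) (hc : 0 ≤ c) (ht : 0 ≤ t) (hr0 : 0 < r) (hr1 : r ≤ 1)
    (hs2 : s ^ 2 + co ^ 2 = 1) (hco : co ≤ 0) :
    (t + c + 1) ^ 2 * r ^ 2 ≤ (c + 2) ^ 2 * ((t - r * co) ^ 2 + (r * s) ^ 2) := by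
  have htco : 0 ≤ t * r * (-co) := mul_nonneg (mul_nonneg ht hr0.le) (by linarith)
  have hCS : (t + c + 1) ^ 2 ≤ (c + 2) ^ 2 * (t ^ 2 + 1) := by
    nlinarith [sq_nonneg (t * (c + 1) - 1), sq_nonneg t, mul_nonneg hc (sq_nonneg t),
      mul_nonneg (mul_nonneg hc hc) (sq_nonneg t), mul_nonneg hc ht]
  have hD' : t ^ 2 + r ^ 2 ≤ (t - r * co) ^ 2 + (r * s) ^ 2 := by
    nlinarith [htco, sq_nonneg (r * co)]
  have h1 := mul_le_mul_of_nonneg_right hCS (sq_nonneg r)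
  have hr2 : r ^ 2 ≤ 1 := by nlinarith
  have hrr : t ^ 2 * r ^ 2 ≤ t ^ 2 := by nlinarith [mul_le_mul_of_nonneg_left hr2 (sq_nonneg t)]
  have h2 : (c + 2) ^ 2 * (t ^ 2 + 1) * r ^ 2 ≤ (c + 2) ^ 2 * (t ^ 2 + r ^ 2) := by
    nlinarith [mul_le_mul_of_nonneg_left hrr (sq_nonneg (c + 2))]
  have h3 := mul_le_mul_of_nonneg_left hD' (sq_nonneg (c + 2))
  linarith

private lemma keyB2 (c t r co s : ℝ) (hc : 0 ≤ c) (ht : 0 ≤ t) (hr0 : 0 < r) (hr1 : 1 ≤ r)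
    (hs2 : s ^ 2 + co ^ 2 = 1) (hco : co ≤ 0) :
    (t + c + 1) ^ 2 ≤ (c + 2) ^ 2 * ((t - r * co) ^ 2 + (r * s) ^ 2) := by
  have htco : 0 ≤ t * r * (-co) := mul_nonneg (mul_nonneg ht hr0.le) (by linarith)
  have hCS : (t + c + 1) ^ 2 ≤ (c + 2) ^ 2 * (t ^ 2 + 1) := by
    nlinarith [sq_nonneg (t * (c + 1) - 1), sq_nonneg t, mul_nonneg hc (sq_nonneg t),
      mul_nonneg (mul_nonneg hc hc) (sq_nonneg t), mul_nonneg hc ht]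
  have hr2 : 1 ≤ r ^ 2 := by nlinarith
  have hD' : t ^ 2 + 1 ≤ (t - r * co) ^ 2 + (r * s) ^ 2 := by
    nlinarith [htco, sq_nonneg (r * co), hr2]
  have h3 := mul_le_mul_of_nonneg_left hD' (sq_nonneg (c + 2))
  linarith

private lemma le_mul_inv_aux (a C p D : ℝ) (hp : 0 < p) (h : a * p ≤ C * D) :
    a ≤ C * p⁻¹ * D := by
  rw [show C * p⁻¹ * D = C * D / p by ring, le_div_iff₀ hp]
  exact h

/-- For `c ≥ 0` and `ζ ∈ ℂ \ [c,∞)`, every real `x ≥ c` satisfies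
`(x + 1)²/|x − ζ|² ≤ (c + 2)² ρ(ζ)`. -/
theorem sup_add_one_sq_div_abs_sq (c : ℝ) (hc : 0 ≤ c) (ζ : ℂ) (ψ : ℝ)
    (hζ : ∀ x : ℝ, c ≤ x → ζ ≠ (x : ℂ))
    (hψ : ψ ∈ Set.Ioo (0 : ℝ) (2 * Real.pi))
    (hζψ : ζ - (c : ℂ) = (‖ζ - (c : ℂ)‖ : ℂ) * Complex.exp ((ψ : ℂ) * Complex.I)) :
    ∀ x : ℝ, c ≤ x →
      (x + 1) ^ 2 / ‖(x : ℂ) - ζ‖ ^ 2 ≤ (c + 2) ^ 2 * rhoFlat c ζ ψ := by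
  intro x hx
  obtain ⟨hψ0, hψ2⟩ := hψ
  have hπ : (0:ℝ) < Real.pi := Real.pi_pos
  set r : ℝ := ‖ζ - (c : ℂ)‖ with hrdef
  have hζc : ζ ≠ (c : ℂ) := hζ c le_rfl
  have hr0 : 0 < r := by
    rw [hrdef]
    exact norm_pos_iff.mpr (sub_ne_zero.mpr hζc)
  have hs2 : Real.sin ψ ^ 2 + Real.cos ψ ^ 2 = 1 := Real.sin_sq_add_cos_sq ψ
  have hco1 : Real.cos ψ ≤ 1 := Real.cos_le_one ψ
  -- the complex number x - ζ in rectangular coordinates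
  have hζeq : ζ - (c:ℂ) = (r:ℂ) * ((Real.cos ψ : ℂ) + (Real.sin ψ : ℂ) * Complex.I) := by
    rw [hζψ, Complex.exp_mul_I, ← Complex.ofReal_cos, ← Complex.ofReal_sin]
  have hzre : (x:ℂ) - ζ = ((x - c - r * Real.cos ψ : ℝ) : ℂ)
      + ((-(r * Real.sin ψ) : ℝ) : ℂ) * Complex.I := by
    have h : ζ = (c:ℂ) + (r:ℂ) * ((Real.cos ψ : ℂ) + (Real.sin ψ : ℂ) * Complex.I) := by
      rw [← hζeq]; ring
    rw [h]; push_cast; ring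
  have hDeq : ‖(x:ℂ) - ζ‖ ^ 2
      = (x - c - r * Real.cos ψ) ^ 2 + (r * Real.sin ψ) ^ 2 := by
    rw [hzre, Complex.norm_add_mul_I, Real.sq_sqrt (by positivity)]
    ring
  have hD0 : 0 < ‖(x:ℂ) - ζ‖ ^ 2 := by
    have : (x:ℂ) - ζ ≠ 0 := sub_ne_zero.mpr fun h => hζ x hx h.symm
    exact pow_pos (norm_pos_iff.mpr this) 2
  rw [div_le_iff₀ hD0]
  set t : ℝ := x - c with htdef
  have ht : 0 ≤ t := by simp [htdef]; linarith
  have hxt : x + 1 = t + c + 1 := by rw [htdef]; ring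
  set s : ℝ := Real.sin ψ
  set co : ℝ := Real.cos ψ
  have hDeq' : ‖(x:ℂ) - ζ‖ ^ 2 = (t - r * co) ^ 2 + (r * s) ^ 2 := by
    rw [hDeq]
  by_cases hcond : (0 < ψ ∧ ψ < Real.pi / 2) ∨ (3 * Real.pi / 2 < ψ ∧ ψ < 2 * Real.pi)
  · -- cos ψ > 0, sin ψ ≠ 0
    have hcA : cArg ψ = |s|⁻¹ := by rw [cArg, if_pos hcond]
    have hcopos : 0 < co ∧ s ≠ 0 := by
      rcases hcond with ⟨h1, h2⟩ | ⟨h1, h2⟩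
      · constructor
        · exact Real.cos_pos_of_mem_Ioo ⟨by linarith, h2⟩
        · exact ne_of_gt (Real.sin_pos_of_pos_of_lt_pi h1 (by linarith))
      · constructor
        · have : co = Real.cos (ψ - 2 * Real.pi) := by
            simp [co, Real.cos_sub_two_pi]
          rw [this]
          exact Real.cos_pos_of_mem_Ioo ⟨by linarith, by linarith⟩
        · have hs : Real.sin (ψ - Real.pi) > 0 :=
            Real.sin_pos_of_pos_of_lt_pi (by linarith) (by linarith)
          rw [Real.sin_sub_pi] at hs
          exact ne_of_lt (by linarith)
    obtain ⟨hcopos, hsne⟩ := hcopos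
    have hs2pos : 0 < s ^ 2 := by positivity
    have hcA2 : cArg ψ ^ 2 = (s ^ 2)⁻¹ := by
      rw [hcA, inv_pow, sq_abs]
    rw [rhoFlat]
    split_ifs with hr1
    · -- r < 1
      have hr1' : r < 1 := by rw [hrdef]; exact hr1
      rw [hcA2, ← hrdef]
      have key : (x + 1) ^ 2 * (s ^ 2 * r ^ 2) ≤ (c + 2) ^ 2 * ‖(x:ℂ) - ζ‖ ^ 2 := by
        rw [hDeq', hxt]
        exact keyA1 c t r co s hc hr0 hr1'.le hs2 hcopos.le hco1
      have hrw : (s ^ 2)⁻¹ * r⁻¹ ^ 2 = (s ^ 2 * r ^ 2)⁻¹ := by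
        rw [inv_pow, ← mul_inv]
      rw [hrw]
      exact le_mul_inv_aux _ _ _ _ (by positivity) key
    · -- r ≥ 1
      push_neg at hr1
      have hr1' : 1 ≤ r := by rw [hrdef]; exact hr1
      rw [hcA2]
      have key : (x + 1) ^ 2 * s ^ 2 ≤ (c + 2) ^ 2 * ‖(x:ℂ) - ζ‖ ^ 2 := by
        rw [hDeq', hxt]
        exact (mul_le_mul_iff_of_pos_right (pow_pos hr0 2)).mp
          (keyA2 c t r co s hc hr0 hr1' hs2 hco1)
      exact le_mul_inv_aux _ _ _ _ hs2pos key
  · -- π/2 ≤ ψ ≤ 3π/2, cos ψ ≤ 0, cArg = 1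
    have hcA : cArg ψ = 1 := by rw [cArg, if_neg hcond]
    push_neg at hcond
    have hψlo : Real.pi / 2 ≤ ψ := hcond.1 hψ0
    have hψhi : ψ ≤ 3 * Real.pi / 2 := by
      by_contra h
      push_neg at h
      linarith [hcond.2 h]
    have hconeg : co ≤ 0 :=
      Real.cos_nonpos_of_pi_div_two_le_of_le hψlo (by linarith)
    rw [rhoFlat, hcA]
    split_ifs with hr1
    · -- r < 1
      have hr1' : r < 1 := by rw [hrdef]; exact hr1
      rw [← hrdef]
      have key : (x + 1) ^ 2 * r ^ 2 ≤ (c + 2) ^ 2 * ‖(x:ℂ) - ζ‖ ^ 2 := by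
        rw [hDeq', hxt]
        exact keyB1 c t r co s hc ht hr0 hr1'.le hs2 hconeg
      have hrw : (1:ℝ) ^ 2 * r⁻¹ ^ 2 = (r ^ 2)⁻¹ := by
        rw [one_pow, one_mul, inv_pow]
      rw [hrw]
      exact le_mul_inv_aux _ _ _ _ (by positivity) key
    · -- r ≥ 1
      push_neg at hr1
      have hr1' : 1 ≤ r := by rw [hrdef]; exact hr1
      have key : (x + 1) ^ 2 ≤ (c + 2) ^ 2 * ‖(x:ℂ) - ζ‖ ^ 2 := by
        rw [hDeq', hxt]
        exact keyB2 c t r co s hc ht hr0 hr1' hs2 hconeg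
      calc (x + 1) ^ 2 ≤ (c + 2) ^ 2 * ‖(x:ℂ) - ζ‖ ^ 2 := key
        _ = (c + 2) ^ 2 * 1 ^ 2 * ‖(x:ℂ) - ζ‖ ^ 2 := by ring
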